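/- Suppose r: [0,T] → (0,∞) is differentiable and satisfies r' ≤ r(D r² - C) where C, D > 0 and r(s) < √(C/D) for all s ∈ [0,T]. Then r(t) ≤ K·r(0)·e^{-Ct} for all t ∈ [0,T], where K = F²/(F² - r(0)²) and F = √(C/D). -/

import Mathlib

open Real Set

set_option maxHeartbeats 1000000 in
/-- If `r : [0,T] → (0,∞)` satisfies `r' ≤ r(D r² - C)` with `C, D > 0` and
`r(s) < √(C/D)` on `[0,T]`, then `r(t) ≤ K r(0) e^{-Ct}` where
`K = F²/(F² - r(0)²)`, `F = √(C/D)`. -/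
theorem exp_decay_upper_bound (C D T : ℝ) (hC : 0 < C) (hD : 0 < D) (hT : 0 ≤ T)
    (F : ℝ) (hF : F = Real.sqrt (C / D))
    (r r' : ℝ → ℝ)
    (hderiv : ∀ s ∈ Icc (0 : ℝ) T, HasDerivAt r (r' s) s)
    (hpos : ∀ s ∈ Icc (0 : ℝ) T, 0 < r s)
    (hlt : ∀ s ∈ Icc (0 : ℝ) T, r s < F)
    (hineq : ∀ s ∈ Icc (0 : ℝ) T, r' s ≤ r s * (D * (r s) ^ 2 - C)) :
    ∀ t ∈ Icc (0 : ℝ) T,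
      r t ≤ (F ^ 2 / (F ^ 2 - (r 0) ^ 2)) * r 0 * exp (-C * t) := by
  have h0 : (0:ℝ) ∈ Icc (0:ℝ) T := ⟨le_refl _, hT⟩
  have hF2 : F ^ 2 = C / D := by
    rw [hF]; exact Real.sq_sqrt (le_of_lt (div_pos hC hD))
  have hFpos : 0 < F := lt_trans (hpos 0 ⟨le_refl _, hT⟩) (hlt 0 ⟨le_refl _, hT⟩)
  have hC' : C = D * F ^ 2 := by rw [hF2]; field_simp
  -- v = F² - r², positive
  set v : ℝ → ℝ := fun s => F ^ 2 - (r s) ^ 2 with hv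
  have hvpos : ∀ s ∈ Icc (0:ℝ) T, 0 < v s := by
    intro s hs
    have h1 := hlt s hs; have h2 := hpos s hs
    simp only [hv]; nlinarith
  -- w = r²/v, g = w * exp(2Cs)
  set w : ℝ → ℝ := fun s => (r s) ^ 2 / v s with hw
  set g : ℝ → ℝ := fun s => w s * Real.exp (2 * C * s) with hg
  -- derivative of g
  set gd : ℝ → ℝ := fun s =>
    ((2 * r s * r' s) * v s - (r s) ^ 2 * (-(2 * r s * r' s))) / (v s) ^ 2
      * Real.exp (2 * C * s)
    + w s * (Real.exp (2 * C * s) * (2 * C)) with hgdd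
  have hgd : ∀ s ∈ Icc (0:ℝ) T, HasDerivAt g (gd s) s := by
    intro s hs
    have hr := hderiv s hs
    have hu : HasDerivAt (fun x => (r x) ^ 2) (2 * r s * r' s) s := by
      exact (hr.pow 2).congr_deriv (by norm_num <;> ring)
    have hvd : HasDerivAt v (-(2 * r s * r' s)) s := by
      exact ((hasDerivAt_const s (F ^ 2)).sub hu).congr_deriv (by ring)
    have hwd : HasDerivAt w
        (((2 * r s * r' s) * v s - (r s) ^ 2 * (-(2 * r s * r' s))) / (v s) ^ 2) s :=
      hu.div hvd (ne_of_gt (hvpos s hs))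
    have hlin : HasDerivAt (fun x : ℝ => 2 * C * x) (2 * C) s := by
      simpa using (hasDerivAt_id s).const_mul (2 * C)
    have hexp : HasDerivAt (fun x : ℝ => Real.exp (2 * C * x))
        (Real.exp (2 * C * s) * (2 * C)) s := hlin.exp
    exact hwd.mul hexp
  -- gd ≤ 0 on Icc
  have hgd0 : ∀ s ∈ Icc (0:ℝ) T, gd s ≤ 0 := by
    intro s hs
    have h1 := hineq s hs
    have h2 := hpos s hs
    have h3 := hvpos s hs
    have hkey : 2 * r s * r' s * F ^ 2 + 2 * C * (r s) ^ 2 * v s ≤ 0 := by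
      have hm := mul_le_mul_of_nonneg_left h1
        (by positivity : (0:ℝ) ≤ 2 * r s * F ^ 2)
      have hC4 : (D * F ^ 2 - C) * (r s) ^ 4 = 0 := by rw [hC']; ring
      simp only [hv] at *
      nlinarith [hm, hC4]
    have hrw : gd s = (2 * r s * r' s * F ^ 2 + 2 * C * (r s) ^ 2 * v s) / (v s) ^ 2
        * Real.exp (2 * C * s) := by
      simp only [hgdd, hw, hv]
      field_simp
      ring
    rw [hrw]
    have h4 : (2 * r s * r' s * F ^ 2 + 2 * C * (r s) ^ 2 * v s) / (v s) ^ 2 ≤ 0 :=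
      div_nonpos_of_nonpos_of_nonneg hkey (sq_nonneg _)
    exact mul_nonpos_of_nonpos_of_nonneg h4 (Real.exp_nonneg _)
  -- g is antitone on Icc
  have hanti : AntitoneOn g (Icc (0:ℝ) T) := by
    apply antitoneOn_of_deriv_nonpos (convex_Icc 0 T)
    · exact fun s hs => (hgd s hs).continuousAt.continuousWithinAt
    · intro s hs
      rw [interior_Icc] at hs
      exact ((hgd s ⟨le_of_lt hs.1, le_of_lt hs.2⟩).differentiableAt).differentiableWithinAt
    · intro s hs
      rw [interior_Icc] at hs
      have hs' : s ∈ Icc (0:ℝ) T := ⟨le_of_lt hs.1, le_of_lt hs.2⟩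
      rw [(hgd s hs').deriv]
      exact hgd0 s hs'
  intro t ht
  have hgle : g t ≤ g 0 := hanti h0 ht ht.1
  -- unpack
  have hVt := hvpos t ht
  have hV0 := hvpos 0 h0
  have hRt := hpos t ht
  have hR0 := hpos 0 h0
  have hE : (0:ℝ) < Real.exp (C * t) := Real.exp_pos _
  have hE2 : Real.exp (2 * C * t) = Real.exp (C * t) ^ 2 := by
    rw [← Real.exp_nat_mul]; ring_nf
  have hgle' : (r t) ^ 2 / v t * Real.exp (2 * C * t) ≤ (r 0) ^ 2 / v 0 := by
    simpa [hg, hw, Real.exp_zero] using hgle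
  -- key1 : r t ^2 * exp(2Ct) * v 0 ≤ r 0 ^2 * v t
  have key1 : (r t) ^ 2 * Real.exp (2 * C * t) * v 0 ≤ (r 0) ^ 2 * v t := by
    rw [div_mul_eq_mul_div, div_le_div_iff₀ hVt hV0] at hgle'
    linarith
  have hVtF : v t ≤ F ^ 2 := by simp only [hv]; nlinarith
  have hV0F : v 0 ≤ F ^ 2 := by simp only [hv]; nlinarith
  -- A ≤ B from A² ≤ B²
  have hA2 : (r t * Real.exp (C * t) * v 0) ^ 2 ≤ (F ^ 2 * r 0) ^ 2 := by
    have e1 : (r t * Real.exp (C * t) * v 0) ^ 2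
        = ((r t) ^ 2 * Real.exp (2 * C * t) * v 0) * v 0 := by
      rw [hE2]; ring
    rw [e1]
    calc ((r t) ^ 2 * Real.exp (2 * C * t) * v 0) * v 0
        ≤ ((r 0) ^ 2 * v t) * v 0 :=
          mul_le_mul_of_nonneg_right key1 (le_of_lt hV0)
      _ ≤ ((r 0) ^ 2 * F ^ 2) * F ^ 2 := by
          nlinarith [mul_le_mul_of_nonneg_left
            (mul_le_mul hVtF hV0F hV0.le (le_of_lt (pow_pos hFpos 2))) (sq_nonneg (r 0))]
      _ = (F ^ 2 * r 0) ^ 2 := by ring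
  have hAB : r t * Real.exp (C * t) * v 0 ≤ F ^ 2 * r 0 := by
    nlinarith [hA2, mul_pos (mul_pos hRt hE) hV0, mul_pos (pow_pos hFpos 2) hR0]
  -- finish
  have hrhs : F ^ 2 / (F ^ 2 - (r 0) ^ 2) * r 0 * Real.exp (-C * t)
      = F ^ 2 * r 0 / (v 0 * Real.exp (C * t)) := by
    simp only [hv]
    rw [neg_mul, Real.exp_neg]
    field_simp
  rw [hrhs, le_div_iff₀ (by positivity)]
  nlinarith [hAB]
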